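/- Let L ⊆ ℝ^n be a nonempty compact set and p a positive integer. The restriction map ρ : C(ℝ^n,ℝ^p) → C(L,ℝ^p), f ↦ f|_L, between the spaces of continuous maps endowed with the compact-open topologies, is surjective and open; consequently, the compact-open topology on C(L,ℝ^p) coincides with the quotient topology coinduced by ρ from the compact-open topology on C(ℝ^n,ℝ^p). -/
import Mathlib

open Topology Set Metric

/-- For a nonempty compact `L ⊆ ℝⁿ` and `p ≥ 1`, the restriction map
`ρ : C(ℝⁿ,ℝ^p) → C(L,ℝ^p)` between the spaces of continuous maps with the compact-open
topologies is surjective and open; consequently the compact-open topology on `C(L,ℝ^p)`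
coincides with the quotient topology coinduced by `ρ`. -/
theorem stmt4 (n p : ℕ) (hp : 0 < p) (L : Set (Fin n → ℝ)) (hL : IsCompact L)
    (hne : L.Nonempty) :
    Function.Surjective
        (fun f : C((Fin n → ℝ), (Fin p → ℝ)) => f.restrict L) ∧
      IsOpenMap (fun f : C((Fin n → ℝ), (Fin p → ℝ)) => f.restrict L) ∧
      (inferInstance : TopologicalSpace C(↥L, Fin p → ℝ)) =
        TopologicalSpace.coinduced
          (fun f : C((Fin n → ℝ), (Fin p → ℝ)) => f.restrict L) inferInstance := by
  have hLc : IsClosed L := hL.isClosed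
  haveI : CompactSpace L := isCompact_iff_compactSpace.mp hL
  set ρ := fun f : C((Fin n → ℝ), (Fin p → ℝ)) => f.restrict L with hρ
  have hsurj : Function.Surjective ρ := fun g => ContinuousMap.exists_restrict_eq hLc g
  have hopen : IsOpenMap ρ := by
    intro U hU
    rw [isOpen_iff_mem_nhds]
    rintro - ⟨f, hfU, rfl⟩
    -- basis of nhds of f in compact-open topology
    have hb := nhds_basis_uniformity'
      (x := f) (Metric.uniformity_basis_dist.compactConvergenceUniformity
        (α := Fin n → ℝ) (β := Fin p → ℝ))
    obtain ⟨⟨K, ε⟩, ⟨hK, hε⟩, hKε⟩ := hb.mem_iff.mp (hU.mem_nhds hfU)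
    refine Filter.mem_of_superset (Metric.ball_mem_nhds (ρ f) (half_pos hε)) ?_
    intro h hh
    haveI : TietzeExtension.{0} (Metric.closedBall (0 : Fin p → ℝ) (ε/2)) :=
      Metric.instTietzeExtensionClosedBall ℝ _ (half_pos hε)
    have hd : ∀ x : L, (h - ρ f) x ∈ Metric.closedBall (0 : Fin p → ℝ) (ε/2) := by
      intro x
      simp only [ContinuousMap.sub_apply, Metric.mem_closedBall, dist_zero_right,
        ← dist_eq_norm]
      exact (ContinuousMap.dist_apply_le_dist x).trans (le_of_lt (mem_ball.mp hh))
    obtain ⟨e, he_mem, he_restrict⟩ :=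
      ContinuousMap.exists_forall_mem_restrict_eq hLc (h - ρ f) hd
    refine ⟨f + e, hKε ?_, ?_⟩
    · intro x hx
      have := he_mem x
      simp only [Metric.mem_closedBall, dist_zero_right] at this
      simp only [Set.mem_setOf_eq, ContinuousMap.add_apply, dist_add_self_left,
        ← dist_eq_norm] at *
      calc dist (f x) (f x + e x) = ‖e x‖ := by simp [dist_eq_norm]
        _ ≤ ε/2 := this
        _ < ε := half_lt_self hε
    · show ρ (f + e) = h
      have : ρ (f + e) = ρ f + e.restrict L := rfl
      rw [this, he_restrict]
      abel
  refine ⟨hsurj, hopen, ?_⟩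
  exact (hopen.isQuotientMap (ContinuousMap.continuous_restrict L) hsurj).eq_coinduced
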